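/- arXiv:1803.02937 — 3 statements merged into one kernel-verified Lean document; each statement's English description precedes it below -/
import Mathlib

section
/- Let Ω be a bounded open subset of ℝⁿ and let D be an open subset of ℝⁿ whose closure is contained in Ω. Let c : [0,1] → closure(Ω) be a needle, i.e. c is continuous, c(0) and c(1) lie in the frontier of Ω, and c(t) ∈ Ω for all t ∈ (0,1). If there exists t ∈ [0,1] with c(t) ∈ frontier(D), then there exists a unique t₀ ∈ (0,1) such that c(t) ∈ Ω \ closure(D) for all t ∈ (0, t₀) and c(t₀) ∈ frontier(D). -/
/-- Let `Ω` be a bounded open subset of `ℝⁿ` and `D` an open subset with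
`closure D ⊆ Ω`.  Let `c : [0,1] → closure Ω` be a needle, i.e. continuous on `[0,1]`,
with `c 0, c 1 ∈ frontier Ω` and `c t ∈ Ω` for `t ∈ (0,1)`.  If the needle touches `frontier D`,
then there is a unique `t₀ ∈ (0,1)` such that `c t ∈ Ω \ closure D` for all `t ∈ (0, t₀)`
and `c t₀ ∈ frontier D`. -/
theorem impact_parameter_exists_unique {n : ℕ}
    (Ω D : Set (EuclideanSpace ℝ (Fin n)))
    (hΩopen : IsOpen Ω) (hΩbdd : Bornology.IsBounded Ω)
    (hDopen : IsOpen D) (hDsub : closure D ⊆ Ω)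
    (c : ℝ → EuclideanSpace ℝ (Fin n))
    (hc_cont : ContinuousOn c (Set.Icc 0 1))
    (hc_maps : ∀ t ∈ Set.Icc (0:ℝ) 1, c t ∈ closure Ω)
    (hc0 : c 0 ∈ frontier Ω) (hc1 : c 1 ∈ frontier Ω)
    (hc_in : ∀ t ∈ Set.Ioo (0:ℝ) 1, c t ∈ Ω)
    (htouch : ∃ t ∈ Set.Icc (0:ℝ) 1, c t ∈ frontier D) :
    ∃! t₀ : ℝ, t₀ ∈ Set.Ioo (0:ℝ) 1 ∧
      (∀ t ∈ Set.Ioo (0:ℝ) t₀, c t ∈ Ω \ closure D) ∧ c t₀ ∈ frontier D := by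
  obtain ⟨s, hs, hsD⟩ := htouch
  -- boundary points of Ω are not in closure D
  have hnotΩ : ∀ x ∈ frontier Ω, x ∉ closure D := by
    intro x hx hxD
    have : x ∉ Ω := (hΩopen.frontier_eq ▸ hx).2
    exact this (hDsub hxD)
  set S : Set ℝ := Set.Icc 0 1 ∩ c ⁻¹' closure D with hSdef
  have hSclosed : IsClosed S :=
    hc_cont.preimage_isClosed_of_isClosed isClosed_Icc isClosed_closure
  have hSne : S.Nonempty := ⟨s, hs, hsD.1⟩
  have hSbdd : BddBelow S := ⟨0, fun t ht => ht.1.1⟩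
  set t₀ : ℝ := sInf S with ht₀def
  have ht₀S : t₀ ∈ S := hSclosed.csInf_mem hSne hSbdd
  have ht₀Icc : t₀ ∈ Set.Icc (0:ℝ) 1 := ht₀S.1
  have ht₀D : c t₀ ∈ closure D := ht₀S.2
  have ht₀pos : 0 < t₀ := by
    rcases lt_or_eq_of_le ht₀Icc.1 with h | h
    · exact h
    · exact absurd (h ▸ ht₀D) (hnotΩ _ hc0)
  have ht₀lt1 : t₀ < 1 := by
    rcases lt_or_eq_of_le ht₀Icc.2 with h | h
    · exact h
    · exact absurd (h ▸ ht₀D) (hnotΩ _ hc1)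
  have hbefore : ∀ t ∈ Set.Ioo (0:ℝ) t₀, c t ∈ Ω \ closure D := by
    intro t ht
    refine ⟨hc_in t ⟨ht.1, ht.2.trans ht₀lt1⟩, fun hD => ?_⟩
    have : t ∈ S := ⟨⟨ht.1.le, (ht.2.trans ht₀lt1).le⟩, hD⟩
    exact absurd (csInf_le hSbdd this) (not_le.mpr ht.2)
  -- c t₀ is a limit of points outside D
  have hfr : c t₀ ∈ frontier D := by
    refine ⟨ht₀D, fun hint => ?_⟩
    rw [hDopen.interior_eq] at hint
    have hsub : Set.Ioo (0:ℝ) t₀ ⊆ Set.Icc 0 1 := fun t ht =>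
      ⟨ht.1.le, (ht.2.trans ht₀lt1).le⟩
    have hNB : (nhdsWithin t₀ (Set.Ioo 0 t₀)).NeBot := by
      rw [← mem_closure_iff_nhdsWithin_neBot, closure_Ioo (ne_of_lt ht₀pos)]
      exact ⟨ht₀pos.le, le_refl _⟩
    have htend : Filter.Tendsto c (nhdsWithin t₀ (Set.Ioo 0 t₀)) (nhds (c t₀)) :=
      (hc_cont t₀ ht₀Icc).mono hsub
    have hmem : c t₀ ∈ closure Dᶜ := by
      refine mem_closure_of_tendsto htend ?_
      filter_upwards [self_mem_nhdsWithin] with t ht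
      exact fun hD => (hbefore t ht).2 (subset_closure hD)
    rw [hDopen.isClosed_compl.closure_eq] at hmem
    exact hmem hint
  refine ⟨t₀, ⟨⟨ht₀pos, ht₀lt1⟩, hbefore, hfr⟩, ?_⟩
  rintro t₁ ⟨ht₁, hb₁, hf₁⟩
  by_contra hne
  rcases lt_or_gt_of_ne hne with h | h
  · exact (hbefore t₁ ⟨ht₁.1, h⟩).2 hf₁.1
  · exact (hb₁ t₀ ⟨ht₀pos, h⟩).2 ht₀D
end

section
/- (Claim 1) Let U ⊆ ℝ³ be open, let λc, μc be real constants with λc + 2μc ≠ 0, let g : ℝ³ → ℝ be of class C³ on U with Δg = 0 on U, let λ₀ : ℝ³ → ℝ be of class C¹ on U and μ₀ : ℝ³ → ℝ of class C² on U. Suppose w : ℝ³ → ℝ is of class C³ on U and satisfies Δw(x) = −Σₖ ∂ₖg(x)·∂ₖμ₀(x) for all x ∈ U, and E : ℝ³ → ℝ³ is of class C² on U and satisfies, for each i and all x ∈ U, Σⱼ ∂ⱼ( λc·(div E)·δᵢⱼ + 2μc·(Sym∇E)ᵢⱼ )(x) = 2·Σⱼ ∂ᵢ∂ⱼμ₀(x)·∂ⱼg(x).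 Then the field F := (2/(λc + 2μc))·∇w + E satisfies, for each i and all x ∈ U, Σⱼ ∂ⱼ( λc·(div F)·δᵢⱼ + 2μc·(Sym∇F)ᵢⱼ )(x) = − Σⱼ ∂ⱼ( λ₀·(Δg)·δᵢⱼ + 2μ₀·∂ᵢ∂ⱼg )(x); that is, L_{λc,μc}F = (L_{λc,μc} − L_{λ₀,μ₀})(∇g) on U. -/
/-- The partial derivative of a scalar function on `ℝ³` in the `i`-th coordinate direction. -/
noncomputable def pd (i : Fin 3) (f : EuclideanSpace ℝ (Fin 3) → ℝ)
    (x : EuclideanSpace ℝ (Fin 3)) : ℝ :=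
  fderiv ℝ f x (EuclideanSpace.single i 1)

section infra
variable {U : Set (EuclideanSpace ℝ (Fin 3))} {x : EuclideanSpace ℝ (Fin 3)}
  {f g : EuclideanSpace ℝ (Fin 3) → ℝ} {i j : Fin 3}

lemma pd_congr (hU : IsOpen U) (hx : x ∈ U) (h : ∀ y ∈ U, f y = g y) :
    pd i f x = pd i g x := by
  unfold pd
  rw [Filter.EventuallyEq.fderiv_eq]
  filter_upwards [hU.mem_nhds hx] with y hy using h y hy

lemma pd_add (hf : DifferentiableAt ℝ f x) (hg : DifferentiableAt ℝ g x) :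
    pd i (fun y => f y + g y) x = pd i f x + pd i g x := by
  unfold pd; rw [fderiv_fun_add hf hg]; rfl

lemma pd_const_mul (hf : DifferentiableAt ℝ f x) (c : ℝ) :
    pd i (fun y => c * f y) x = c * pd i f x := by
  unfold pd; rw [fderiv_const_mul hf c]; rfl

lemma pd_mul (hf : DifferentiableAt ℝ f x) (hg : DifferentiableAt ℝ g x) :
    pd i (fun y => f y * g y) x = pd i f x * g x + f x * pd i g x := by
  unfold pd; rw [fderiv_fun_mul hf hg]; simp; ring

lemma pd_neg : pd i (fun y => -f y) x = -pd i f x := by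
  unfold pd; rw [fderiv_fun_neg]; rfl

lemma pd_sum {s : Finset (Fin 3)} {F : Fin 3 → EuclideanSpace ℝ (Fin 3) → ℝ}
    (hF : ∀ k ∈ s, DifferentiableAt ℝ (F k) x) :
    pd i (fun y => ∑ k ∈ s, F k y) x = ∑ k ∈ s, pd i (F k) x := by
  unfold pd
  rw [fderiv_fun_sum hF]; simp

lemma pd_contDiffOn {n m : WithTop ℕ∞} (hU : IsOpen U) (hf : ContDiffOn ℝ n f U)
    (hmn : m + 1 ≤ n) : ContDiffOn ℝ m (pd i f) U := by
  have h1 : ContDiffOn ℝ m (fderiv ℝ f) U := hf.fderiv_of_isOpen hU hmn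
  exact h1.clm_apply contDiffOn_const

lemma differentiableAt_of_contDiffOn {n : WithTop ℕ∞} (hU : IsOpen U) (hx : x ∈ U)
    (hf : ContDiffOn ℝ n f U) (hn : 1 ≤ n) : DifferentiableAt ℝ f x :=
  ((hf.contDiffAt (hU.mem_nhds hx)).of_le hn).differentiableAt one_ne_zero

lemma pd_differentiableAt {n : WithTop ℕ∞} (hU : IsOpen U) (hx : x ∈ U)
    (hf : ContDiffOn ℝ n f U) (hn : 2 ≤ n) : DifferentiableAt ℝ (pd i f) x :=
  differentiableAt_of_contDiffOn hU hx
    (pd_contDiffOn (m := 1) hU hf (by simpa [one_add_one_eq_two] using hn)) le_rfl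

lemma pd_comm {n : WithTop ℕ∞} (hU : IsOpen U) (hx : x ∈ U) (hf : ContDiffOn ℝ n f U)
    (hn : 2 ≤ n) : pd i (pd j f) x = pd j (pd i f) x := by
  have hsymm : IsSymmSndFDerivAt ℝ f x :=
    (hf.contDiffAt (hU.mem_nhds hx)).isSymmSndFDerivAt
      (by simpa [minSmoothness_of_isRCLikeNormedField] using hn)
  have hdf : DifferentiableAt ℝ (fderiv ℝ f) x := by
    have := ((hf.fderiv_of_isOpen hU (m := 1)
      (by simpa [one_add_one_eq_two] using hn)).contDiffAt (hU.mem_nhds hx))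
    exact this.differentiableAt one_ne_zero
  have key : ∀ a b : Fin 3, pd a (pd b f) x
      = fderiv ℝ (fderiv ℝ f) x (EuclideanSpace.single a 1) (EuclideanSpace.single b 1) := by
    intro a b
    unfold pd
    rw [fderiv_clm_apply hdf (differentiableAt_const _)]
    simp
  rw [key, key, hsymm]

end infra

/-- **Claim 1.** Let `λc, μc` be real constants with `λc + 2μc ≠ 0`, `g` be `C³`
and harmonic on an open `U ⊆ ℝ³`, `λ₀` be `C¹` and `μ₀` be `C²` on `U`.  Suppose `w` is `C³` on
`U` with `Δw = −∇g·∇μ₀` on `U`, and `E` is a `C²` vector field on `U` with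
`L_{λc,μc}E = 2(∇∇μ₀)∇g` on `U`.  Then `F := (2/(λc+2μc))∇w + E` satisfies
`L_{λc,μc}F = −L_{λ₀,μ₀}(∇g)` (i.e. `= (L_{λc,μc} − L_{λ₀,μ₀})(∇g)`, since
`L_{λc,μc}(∇g) = (λc+2μc)∇(Δg) = 0`). -/
theorem lame_claim1 (U : Set (EuclideanSpace ℝ (Fin 3))) (hU : IsOpen U)
    (lamc muc : ℝ) (hc : lamc + 2*muc ≠ 0)
    (g lam0 mu0 w : EuclideanSpace ℝ (Fin 3) → ℝ)
    (E : EuclideanSpace ℝ (Fin 3) → EuclideanSpace ℝ (Fin 3))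
    (hg : ContDiffOn ℝ 3 g U)
    (hharm : ∀ y ∈ U, ∑ k : Fin 3, pd k (pd k g) y = 0)
    (hlam0 : ContDiffOn ℝ 1 lam0 U) (hmu0 : ContDiffOn ℝ 2 mu0 U)
    (hw : ContDiffOn ℝ 3 w U)
    (hwpde : ∀ x ∈ U,
      ∑ k : Fin 3, pd k (pd k w) x = -∑ k : Fin 3, pd k g x * pd k mu0 x)
    (hE : ContDiffOn ℝ 2 E U)
    (hEpde : ∀ i : Fin 3, ∀ x ∈ U,
      ∑ j : Fin 3, pd j (fun y =>
          lamc * (∑ k : Fin 3, pd k (fun v => E v k) y) * (if i = j then (1:ℝ) else 0)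
            + 2*muc * ((pd j (fun v => E v i) y + pd i (fun v => E v j) y) / 2)) x
        = 2 * ∑ j : Fin 3, pd i (pd j mu0) x * pd j g x)
    (x : EuclideanSpace ℝ (Fin 3)) (hx : x ∈ U) (i : Fin 3) :
    ∑ j : Fin 3, pd j (fun y =>
        lamc * (∑ k : Fin 3,
            pd k (fun v => (2/(lamc + 2*muc)) * pd k w v + E v k) y)
          * (if i = j then (1:ℝ) else 0)
          + 2*muc * ((pd j (fun v => (2/(lamc + 2*muc)) * pd i w v + E v i) y
              + pd i (fun v => (2/(lamc + 2*muc)) * pd j w v + E v j) y) / 2)) x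
      = -∑ j : Fin 3, pd j (fun y =>
          lam0 y * (∑ k : Fin 3, pd k (pd k g) y) * (if i = j then (1:ℝ) else 0)
            + 2 * mu0 y * pd i (pd j g) y) x := by
  set c : ℝ := 2/(lamc + 2*muc) with hcdef
  -- basic smoothness of iterated partials
  have hgd1 : ∀ k : Fin 3, ContDiffOn ℝ 2 (pd k g) U :=
    fun k => pd_contDiffOn hU hg (by norm_num)
  have hgd2 : ∀ k l : Fin 3, ContDiffOn ℝ 1 (pd l (pd k g)) U :=
    fun k l => pd_contDiffOn hU (hgd1 k) (by norm_num)
  have hwd1 : ∀ k : Fin 3, ContDiffOn ℝ 2 (pd k w) U :=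
    fun k => pd_contDiffOn hU hw (by norm_num)
  have hwd2 : ∀ k l : Fin 3, ContDiffOn ℝ 1 (pd l (pd k w)) U :=
    fun k l => pd_contDiffOn hU (hwd1 k) (by norm_num)
  have hmud1 : ∀ k : Fin 3, ContDiffOn ℝ 1 (pd k mu0) U :=
    fun k => pd_contDiffOn hU hmu0 (by norm_num)
  have hEco : ∀ k : Fin 3, ContDiffOn ℝ 2 (fun v => E v k) U := fun k => by
    simpa [Function.comp_def] using (EuclideanSpace.proj k).contDiff.comp_contDiffOn hE
  -- differentiability shorthand
  have D : ∀ {f : EuclideanSpace ℝ (Fin 3) → ℝ}, ContDiffOn ℝ 1 f U →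
      ∀ y ∈ U, DifferentiableAt ℝ f y :=
    fun hf y hy => differentiableAt_of_contDiffOn hU hy hf le_rfl
  have Dg1 : ∀ (k : Fin 3) y, y ∈ U → DifferentiableAt ℝ (pd k g) y :=
    fun k y hy => D ((hgd1 k).of_le (by norm_num)) y hy
  have Dg2 : ∀ (k l : Fin 3) y, y ∈ U → DifferentiableAt ℝ (pd l (pd k g)) y :=
    fun k l y hy => D (hgd2 k l) y hy
  have Dw1 : ∀ (k : Fin 3) y, y ∈ U → DifferentiableAt ℝ (pd k w) y :=
    fun k y hy => D ((hwd1 k).of_le (by norm_num)) y hy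
  have Dw2 : ∀ (k l : Fin 3) y, y ∈ U → DifferentiableAt ℝ (pd l (pd k w)) y :=
    fun k l y hy => D (hwd2 k l) y hy
  have Dmu0 : ∀ y, y ∈ U → DifferentiableAt ℝ mu0 y :=
    fun y hy => D (hmu0.of_le (by norm_num)) y hy
  have Dmu1 : ∀ (k : Fin 3) y, y ∈ U → DifferentiableAt ℝ (pd k mu0) y :=
    fun k y hy => D (hmud1 k) y hy
  have DE1 : ∀ (k l : Fin 3) y, y ∈ U → DifferentiableAt ℝ (pd l (fun v => E v k)) y :=
    fun k l y hy => D (pd_contDiffOn hU (hEco k) (by norm_num)) y hy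
  -- Step 1: split the partials of F into the w-part and the E-part
  have hFk : ∀ (a b : Fin 3) y, y ∈ U →
      pd a (fun v => c * pd b w v + E v b) y
        = c * pd a (pd b w) y + pd a (fun v => E v b) y := by
    intro a b y hy
    rw [pd_add ((Dw1 b y hy).const_mul c)
        (D ((hEco b).of_le (by norm_num)) y hy), pd_const_mul (Dw1 b y hy)]
  -- names for the w-part and E-part integrands
  set B : Fin 3 → EuclideanSpace ℝ (Fin 3) → ℝ := fun j y =>
    lamc * (∑ k : Fin 3, pd k (pd k w) y) * (if i = j then (1:ℝ) else 0)
      + 2*muc * ((pd j (pd i w) y + pd i (pd j w) y) / 2) with hBdef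
  set A : Fin 3 → EuclideanSpace ℝ (Fin 3) → ℝ := fun j y =>
    lamc * (∑ k : Fin 3, pd k (fun v => E v k) y) * (if i = j then (1:ℝ) else 0)
      + 2*muc * ((pd j (fun v => E v i) y + pd i (fun v => E v j) y) / 2) with hAdef
  have hBdiff : ∀ (j : Fin 3) y, y ∈ U → DifferentiableAt ℝ (B j) y := by
    intro j y hy
    apply DifferentiableAt.add
    · exact ((DifferentiableAt.fun_sum fun k _ => Dw2 k k y hy).const_mul lamc).mul_const _
    · have h : DifferentiableAt ℝ (fun y => (pd j (pd i w) y + pd i (pd j w) y) / 2) y :=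
        by simpa only [div_eq_mul_inv] using ((Dw2 i j y hy).fun_add (Dw2 j i y hy)).mul_const (2:ℝ)⁻¹
      exact h.const_mul _
  have hAdiff : ∀ (j : Fin 3) y, y ∈ U → DifferentiableAt ℝ (A j) y := by
    intro j y hy
    apply DifferentiableAt.add
    · exact ((DifferentiableAt.fun_sum fun k _ => DE1 k k y hy).const_mul lamc).mul_const _
    · have h : DifferentiableAt ℝ
          (fun y => (pd j (fun v => E v i) y + pd i (fun v => E v j) y) / 2) y :=
        by simpa only [div_eq_mul_inv] using ((DE1 i j y hy).fun_add (DE1 j i y hy)).mul_const (2:ℝ)⁻¹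
      exact h.const_mul _
  -- Step 2: LHS integrand = c * B j + A j on U
  have hsplit : ∀ j : Fin 3,
      pd j (fun y =>
        lamc * (∑ k : Fin 3, pd k (fun v => c * pd k w v + E v k) y)
          * (if i = j then (1:ℝ) else 0)
          + 2*muc * ((pd j (fun v => c * pd i w v + E v i) y
              + pd i (fun v => c * pd j w v + E v j) y) / 2)) x
      = c * pd j (B j) x + pd j (A j) x := by
    intro j
    have h1 : pd j (fun y =>
        lamc * (∑ k : Fin 3, pd k (fun v => c * pd k w v + E v k) y)
          * (if i = j then (1:ℝ) else 0)
          + 2*muc * ((pd j (fun v => c * pd i w v + E v i) y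
              + pd i (fun v => c * pd j w v + E v j) y) / 2)) x
        = pd j (fun y => c * B j y + A j y) x := by
      apply pd_congr hU hx
      intro y hy
      have hsum : ∑ k : Fin 3, pd k (fun v => c * pd k w v + E v k) y
          = ∑ k : Fin 3, (c * pd k (pd k w) y + pd k (fun v => E v k) y) :=
        Finset.sum_congr rfl fun k _ => hFk k k y hy
      rw [hsum, Finset.sum_add_distrib, ← Finset.mul_sum, hFk j i y hy, hFk i j y hy,
        hBdef, hAdef]
      ring
    rw [h1, pd_add ((hBdiff j x hx).const_mul c) (hAdiff j x hx),
      pd_const_mul (hBdiff j x hx)]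
  -- Step 3: the B-part sums to (lamc + 2 muc) * pd i (Δw) x
  have hBj : ∀ j : Fin 3, pd j (B j) x
      = (lamc * (if i = j then (1:ℝ) else 0))
          * pd j (fun y => ∑ k : Fin 3, pd k (pd k w) y) x
        + (2*muc) * pd i (pd j (pd j w)) x := by
    intro j
    have h1 : pd j (B j) x = pd j (fun y =>
        (lamc * (if i = j then (1:ℝ) else 0)) * (∑ k : Fin 3, pd k (pd k w) y)
          + (2*muc) * pd j (pd i w) y) x := by
      apply pd_congr hU hx
      intro y hy
      have := pd_comm (i := i) (j := j) hU hy hw (by norm_num)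
      rw [hBdef]
      dsimp only
      rw [this]
      ring
    have hDsum : DifferentiableAt ℝ (fun y => ∑ k : Fin 3, pd k (pd k w) y) x :=
      DifferentiableAt.fun_sum fun k _ => Dw2 k k x hx
    have h2 : pd j (pd j (pd i w)) x = pd i (pd j (pd j w)) x := by
      have ha : pd j (pd j (pd i w)) x = pd j (pd i (pd j w)) x := by
        apply pd_congr hU hx
        intro y hy
        exact (pd_comm (i := i) (j := j) hU hy hw (by norm_num)).symm
      rw [ha]
      exact pd_comm (i := j) (j := i) hU hx (hwd1 j) le_rfl
    rw [h1, pd_add (hDsum.const_mul _) ((Dw2 i j x hx).const_mul _),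
      pd_const_mul hDsum, pd_const_mul (Dw2 i j x hx), h2]
  have hBsum : ∑ j : Fin 3, pd j (B j) x
      = (lamc + 2*muc) * pd i (fun y => ∑ k : Fin 3, pd k (pd k w) y) x := by
    rw [Finset.sum_congr rfl fun j _ => hBj j, Finset.sum_add_distrib, ← Finset.mul_sum,
      ← pd_sum (fun k _ => Dw2 k k x hx)]
    simp only [mul_ite, mul_one, mul_zero, ite_mul, zero_mul]
    rw [Finset.sum_ite_eq Finset.univ i (fun j => lamc * pd j (fun y => ∑ k : Fin 3, pd k (pd k w) y) x)]
    simp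
    ring
  -- Step 4: pd i (Δw) via the PDE for w
  have hlapw : pd i (fun y => ∑ k : Fin 3, pd k (pd k w) y) x
      = -∑ k : Fin 3, (pd i (pd k g) x * pd k mu0 x + pd k g x * pd i (pd k mu0) x) := by
    have h1 : pd i (fun y => ∑ k : Fin 3, pd k (pd k w) y) x
        = pd i (fun y => -∑ k : Fin 3, pd k g y * pd k mu0 y) x :=
      pd_congr hU hx fun y hy => hwpde y hy
    rw [h1, pd_neg, pd_sum (fun k _ => (Dg1 k x hx).fun_mul (Dmu1 k x hx))]
    congr 1
    exact Finset.sum_congr rfl fun k _ => pd_mul (Dg1 k x hx) (Dmu1 k x hx)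
  -- Step 5: RHS evaluation
  have hCj : ∀ j : Fin 3, pd j (fun y =>
      lam0 y * (∑ k : Fin 3, pd k (pd k g) y) * (if i = j then (1:ℝ) else 0)
        + 2 * mu0 y * pd i (pd j g) y) x
      = 2 * (pd j mu0 x * pd i (pd j g) x + mu0 x * pd i (pd j (pd j g)) x) := by
    intro j
    have h1 : pd j (fun y =>
        lam0 y * (∑ k : Fin 3, pd k (pd k g) y) * (if i = j then (1:ℝ) else 0)
          + 2 * mu0 y * pd i (pd j g) y) x
        = pd j (fun y => 2 * (mu0 y * pd i (pd j g) y)) x := by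
      apply pd_congr hU hx
      intro y hy
      rw [hharm y hy]
      ring
    have h2 : pd j (pd i (pd j g)) x = pd i (pd j (pd j g)) x :=
      pd_comm (i := j) (j := i) hU hx (hgd1 j) le_rfl
    rw [h1, pd_const_mul ((Dmu0 x hx).fun_mul (Dg2 j i x hx)),
      pd_mul (Dmu0 x hx) (Dg2 j i x hx), h2]
  have hlapg : ∑ j : Fin 3, pd i (pd j (pd j g)) x = 0 := by
    rw [← pd_sum (fun k _ => Dg2 k k x hx)]
    have h1 : pd i (fun y => ∑ k : Fin 3, pd k (pd k g) y) x
        = pd i (fun _ => (0:ℝ)) x := pd_congr hU hx fun y hy => hharm y hy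
    rw [h1]
    unfold pd
    simp
  -- Step 6: combine everything
  have key : ∑ j : Fin 3, (c * pd j (B j) x + pd j (A j) x)
      = -∑ j : Fin 3, 2 * (pd j mu0 x * pd i (pd j g) x + mu0 x * pd i (pd j (pd j g)) x) := by
    rw [Finset.sum_add_distrib, ← Finset.mul_sum, hBsum, hlapw]
    have hA : ∑ j : Fin 3, pd j (A j) x = 2 * ∑ j : Fin 3, pd i (pd j mu0) x * pd j g x := by
      rw [hAdef]; exact hEpde i x hx
    rw [hA]
    have hcc : c * (lamc + 2*muc) = 2 := by
      rw [hcdef]; field_simp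
    rw [← mul_assoc, hcc]
    simp only [Finset.mul_sum, mul_add, Finset.sum_add_distrib, ← Finset.mul_sum, hlapg]
    have hswap1 : ∑ j : Fin 3, pd i (pd j mu0) x * pd j g x
        = ∑ j : Fin 3, pd j g x * pd i (pd j mu0) x :=
      Finset.sum_congr rfl fun j _ => mul_comm _ _
    have hswap2 : ∑ j : Fin 3, pd j mu0 x * pd i (pd j g) x
        = ∑ j : Fin 3, pd i (pd j g) x * pd j mu0 x :=
      Finset.sum_congr rfl fun j _ => mul_comm _ _
    rw [hswap1, hswap2]
    ring
  calc ∑ j : Fin 3, pd j (fun y =>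
        lamc * (∑ k : Fin 3, pd k (fun v => c * pd k w v + E v k) y)
          * (if i = j then (1:ℝ) else 0)
          + 2*muc * ((pd j (fun v => c * pd i w v + E v i) y
              + pd i (fun v => c * pd j w v + E v j) y) / 2)) x
      = ∑ j : Fin 3, (c * pd j (B j) x + pd j (A j) x) :=
        Finset.sum_congr rfl fun j _ => hsplit j
    _ = -∑ j : Fin 3, 2 * (pd j mu0 x * pd i (pd j g) x + mu0 x * pd i (pd j (pd j g)) x) :=
        key
    _ = -∑ j : Fin 3, pd j (fun y =>
          lam0 y * (∑ k : Fin 3, pd k (pd k g) y) * (if i = j then (1:ℝ) else 0)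
            + 2 * mu0 y * pd i (pd j g) y) x := by
        rw [Finset.sum_congr rfl fun j _ => hCj j]
end

section
/- Let s > 3 be a real number, D ⊆ ℝ³, a ∈ ℝ³, R > 0, and suppose there exist M ≥ 1 and δ₀ ∈ (0, R] such that for every δ ∈ (0, δ₀) there are p ∈ ℝ³ and r > 0 with the open ball B(p, r) contained in D, dist(p, a) + r ≤ δ, and δ ≤ M·r. Then the function x ↦ ∫⁻_{y ∈ D ∩ B(a,R)} ‖y − x‖^(−s) dy (lower Lebesgue integral with respect to Lebesgue measure on ℝ³, with values in [0,∞]) tends to ∞ as x → a with x ≠ a; i.e., it tends to ⊤ along the punctured neighborhood filter 𝓝[≠] a. -/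
open MeasureTheory

/-- Let `s > 3`, `D ⊆ ℝ³`, `a ∈ ℝ³`, `R > 0`, and suppose there exist `M ≥ 1`
and `δ₀ ∈ (0, R]` such that for every `δ ∈ (0, δ₀)` there are `p ∈ ℝ³` and `r > 0` with
`B(p,r) ⊆ D`, `dist p a + r ≤ δ`, and `δ ≤ M r` (an interior-ball condition, valid at any
boundary point of a Lipschitz domain).  Then
`x ↦ ∫⁻_{D ∩ B(a,R)} ‖y − x‖^{−s} dy` tends to `∞` as `x → a`, `x ≠ a`. -/
theorem lintegral_inv_rpow_tendsto_top (s : ℝ) (hs : 3 < s)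
    (D : Set (EuclideanSpace ℝ (Fin 3))) (a : EuclideanSpace ℝ (Fin 3))
    (R : ℝ) (hR : 0 < R)
    (h : ∃ M : ℝ, 1 ≤ M ∧ ∃ δ₀ ∈ Set.Ioc (0:ℝ) R, ∀ δ ∈ Set.Ioo (0:ℝ) δ₀,
      ∃ p : EuclideanSpace ℝ (Fin 3), ∃ r : ℝ, 0 < r ∧
        Metric.ball p r ⊆ D ∧ dist p a + r ≤ δ ∧ δ ≤ M * r) :
    Filter.Tendsto
      (fun x : EuclideanSpace ℝ (Fin 3) =>
        ∫⁻ y in D ∩ Metric.ball a R, ENNReal.ofReal (‖y - x‖ ^ (-s)))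
      (nhdsWithin a {a}ᶜ) (nhds (⊤ : ENNReal)) := by
  obtain ⟨M, hM, δ₀, ⟨hδ₀pos, hδ₀R⟩, hball⟩ := h
  set V : ENNReal := volume (Metric.ball (0 : EuclideanSpace ℝ (Fin 3)) 1) with hV
  have hVpos : 0 < V := Metric.measure_ball_pos volume 0 one_pos
  have hM0 : (0:ℝ) < M := lt_of_lt_of_le one_pos hM
  set c0 : ℝ := 3 ^ (-s) / M ^ 3 with hc0
  have hc0pos : 0 < c0 :=
    div_pos (Real.rpow_pos_of_pos (by norm_num) _) (by positivity)
  -- key pointwise lower bound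
  have key : ∀ x : EuclideanSpace ℝ (Fin 3), x ≠ a → dist x a < δ₀ / 2 →
      ENNReal.ofReal (c0 * (2 * dist x a) ^ (3 - s)) * V
        ≤ ∫⁻ y in D ∩ Metric.ball a R, ENNReal.ofReal (‖y - x‖ ^ (-s)) := by
    intro x hxa hxclose
    set δ : ℝ := 2 * dist x a with hδdef
    have htpos : 0 < dist x a := dist_pos.mpr hxa
    have hδpos : 0 < δ := by positivity
    have hδlt : δ < δ₀ := by rw [hδdef]; linarith
    obtain ⟨p, r, hr, hsubD, hpr, hMr⟩ := hball δ ⟨hδpos, hδlt⟩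
    have hpa : dist p a ≤ δ - r := by linarith
    -- the interior ball sits inside D ∩ B(a,R)
    have hsub : Metric.ball p r ⊆ D ∩ Metric.ball a R := by
      intro y hy
      refine ⟨hsubD hy, ?_⟩
      have h1 : dist y p < r := Metric.mem_ball.mp hy
      have h2 : dist y a ≤ dist y p + dist p a := dist_triangle y p a
      have h3 : δ < R := lt_of_lt_of_le hδlt hδ₀R
      exact Metric.mem_ball.mpr (by linarith)
    set S : Set (EuclideanSpace ℝ (Fin 3)) := Metric.ball p r \ {x} with hS
    have hSmeas : MeasurableSet S :=
      Metric.isOpen_ball.measurableSet.diff (measurableSet_singleton x)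
    have halg : c0 * δ ^ (3 - s) = (3 * δ) ^ (-s) * (δ / M) ^ 3 := by
      have e1 : (3 * δ) ^ (-s) = 3 ^ (-s) * δ ^ (-s) :=
        Real.mul_rpow (by norm_num) hδpos.le
      have e2 : (δ / M) ^ (3:ℕ) = δ ^ (3:ℝ) / M ^ (3:ℕ) := by
        rw [div_pow]
        congr 1
        rw [← Real.rpow_natCast δ 3]
        norm_num
      have e3 : δ ^ (-s) * δ ^ (3:ℝ) = δ ^ (3 - s) := by
        rw [← Real.rpow_add hδpos]
        ring_nf
      rw [e1, e2, ← e3, hc0]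
      ring
    have hvol : volume (Metric.ball p (δ / M)) ≤ volume S := by
      rw [hS, measure_diff_null (measure_singleton x)]
      refine measure_mono (Metric.ball_subset_ball ?_)
      rw [div_le_iff₀ hM0]
      linarith
    calc ENNReal.ofReal (c0 * δ ^ (3 - s)) * V
        = ENNReal.ofReal ((3 * δ) ^ (-s)) * (ENNReal.ofReal ((δ / M) ^ 3) * V) := by
          rw [halg, ENNReal.ofReal_mul (by positivity), mul_assoc]
      _ = ENNReal.ofReal ((3 * δ) ^ (-s)) * volume (Metric.ball p (δ / M)) := by
          rw [Measure.addHaar_ball (volume : Measure (EuclideanSpace ℝ (Fin 3))) p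
            (by positivity : (0:ℝ) ≤ δ / M)]
          congr 2
          simp [finrank_euclideanSpace_fin]
      _ ≤ ENNReal.ofReal ((3 * δ) ^ (-s)) * volume S := mul_le_mul_right hvol _
      _ = ∫⁻ _ in S, ENNReal.ofReal ((3 * δ) ^ (-s)) := (setLIntegral_const S _).symm
      _ ≤ ∫⁻ y in S, ENNReal.ofReal (‖y - x‖ ^ (-s)) := by
          apply setLIntegral_mono' hSmeas
          intro y hy
          apply ENNReal.ofReal_le_ofReal
          have hyx : y ≠ x := fun hxy => hy.2 (by simp [hxy])
          have hpos : 0 < ‖y - x‖ := by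
            simpa [norm_pos_iff, sub_ne_zero] using hyx
          apply Real.rpow_le_rpow_of_nonpos hpos _ (by linarith)
          have h1 : dist y p < r := Metric.mem_ball.mp hy.1
          have h2 : dist y x ≤ dist y p + dist p a + dist a x := by
            calc dist y x ≤ dist y p + dist p x := dist_triangle y p x
              _ ≤ dist y p + (dist p a + dist a x) := by linarith [dist_triangle p a x]
              _ = dist y p + dist p a + dist a x := by ring
          have h3 : dist a x = δ / 2 := by rw [hδdef, dist_comm]; ring
          rw [← dist_eq_norm]
          linarith
      _ ≤ ∫⁻ y in D ∩ Metric.ball a R, ENNReal.ofReal (‖y - x‖ ^ (-s)) := by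
          apply lintegral_mono_set
          exact (Set.diff_subset).trans hsub
  -- the lower bound blows up
  have hdist : Filter.Tendsto (fun x : EuclideanSpace ℝ (Fin 3) => dist x a)
      (nhdsWithin a {a}ᶜ) (nhdsWithin 0 (Set.Ioi 0)) := by
    apply tendsto_nhdsWithin_of_tendsto_nhds_of_eventually_within
    · have : Filter.Tendsto (fun x : EuclideanSpace ℝ (Fin 3) => dist x a)
          (nhds a) (nhds (dist a a)) :=
        (continuous_id.dist continuous_const).tendsto a
      simpa using this.mono_left nhdsWithin_le_nhds
    · filter_upwards [self_mem_nhdsWithin] with x hx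
      exact dist_pos.mpr hx
  have hdouble : Filter.Tendsto (fun t : ℝ => 2 * t) (nhdsWithin 0 (Set.Ioi 0))
      (nhdsWithin 0 (Set.Ioi 0)) := by
    apply tendsto_nhdsWithin_of_tendsto_nhds_of_eventually_within
    · have : Filter.Tendsto (fun t : ℝ => 2 * t) (nhds 0) (nhds (2 * 0)) :=
        (continuous_const.mul continuous_id).tendsto 0
      simpa using this.mono_left nhdsWithin_le_nhds
    · filter_upwards [self_mem_nhdsWithin] with t ht
      exact mul_pos two_pos (Set.mem_Ioi.mp ht)
  have hrpow : Filter.Tendsto (fun t : ℝ => t ^ (3 - s)) (nhdsWithin 0 (Set.Ioi 0))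
      Filter.atTop := by
    have h1 : Filter.Tendsto (fun t : ℝ => t ^ (s - 3)) (nhdsWithin 0 (Set.Ioi 0))
        (nhdsWithin 0 (Set.Ioi 0)) := by
      apply tendsto_nhdsWithin_of_tendsto_nhds_of_eventually_within
      · have := (Real.continuousAt_rpow_const 0 (s - 3) (Or.inr (by linarith))).tendsto
        rw [Real.zero_rpow (by linarith : s - 3 ≠ 0)] at this
        exact this.mono_left nhdsWithin_le_nhds
      · filter_upwards [self_mem_nhdsWithin] with t ht
        exact Real.rpow_pos_of_pos ht _
    refine h1.inv_tendsto_nhdsGT_zero.congr' ?_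
    filter_upwards [self_mem_nhdsWithin] with t ht
    rw [Pi.inv_apply, ← Real.rpow_neg (le_of_lt ht)]
    ring_nf
  have hg : Filter.Tendsto
      (fun x : EuclideanSpace ℝ (Fin 3) =>
        ENNReal.ofReal (c0 * (2 * dist x a) ^ (3 - s)) * V)
      (nhdsWithin a {a}ᶜ) (nhds ⊤) := by
    have h1 : Filter.Tendsto
        (fun x : EuclideanSpace ℝ (Fin 3) => c0 * (2 * dist x a) ^ (3 - s))
        (nhdsWithin a {a}ᶜ) Filter.atTop := by
      have := (hrpow.comp hdouble).comp hdist
      exact Filter.Tendsto.const_mul_atTop hc0pos this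
    have h2 := ENNReal.tendsto_ofReal_nhds_top.mpr h1
    have h3 := ENNReal.Tendsto.mul_const (b := V) h2 (Or.inl (by simp : (⊤:ENNReal) ≠ 0))
    rwa [ENNReal.top_mul hVpos.ne'] at h3
  apply tendsto_nhds_top_mono hg
  have hmem : Metric.ball a (δ₀ / 2) ∈ nhdsWithin a {a}ᶜ :=
    nhdsWithin_le_nhds (Metric.ball_mem_nhds a (by positivity))
  filter_upwards [hmem, self_mem_nhdsWithin] with x hx hxa
  exact key x hxa (Metric.mem_ball.mp hx)
end
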